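/- Let r ≥ 1. For every ε > 0 there exists k₀ such that for every finite set Y with |Y| = k ≥ k₀, every set X, and every finite class F of functions from X to Y, opt_weak(CART_r(F)) ≤ (1+ε)·(k^r·r·ln k)·opt_std(F). -/

import Mathlib

/-- `GuessForce ok V m` means: in the mistake-bound game with weak (yes/no) reinforcement
where queries have type `Q`, guesses have type `A`, and `ok q g f` says that guess `g` is a
correct answer to query `q` when the hidden target is `f`, an (adaptive) adversary whose
answers must stay consistent with some member of the current version space `V` can force
every deterministic learner to be answered "no" at least `m` times.
At each step the adversary chooses a query `q` and, depending on the learner's guess `g`,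
either answers "no" (`c g = true`, one more mistake, continuing from the consistent
functions for which the guess is wrong) or answers "yes" (`c g = false`, continuing from the
consistent functions for which the guess is correct). -/
inductive GuessForce {α Q A : Type*} (ok : Q → A → α → Prop) : Set α → ℕ → Prop where
  | zero (V : Set α) : V.Nonempty → GuessForce ok V 0
  | step (V : Set α) (m : ℕ) (q : Q) (c : A → Bool)
      (hne : ∀ g : A, (if c g then {f ∈ V | ¬ ok q g f} else {f ∈ V | ok q g f}).Nonempty)
      (h : ∀ g : A, GuessForce ok (if c g then {f ∈ V | ¬ ok q g f} else {f ∈ V | ok q g f})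
        (if c g then m else m + 1)) :
      GuessForce ok V (m + 1)

/-- `opt_weak(CART_r(F))`: the optimal worst-case number of mistakes in the `r`-input weak
reinforcement model, where in each round the adversary presents `r` inputs simultaneously,
the learner guesses all `r` outputs, and is only told whether all `r` guesses are correct. -/
noncomputable def optWeakCart {X Y : Type*} (r : ℕ) (F : Set (X → Y)) : ℕ :=
  sSup {m | GuessForce (fun (x : Fin r → X) (g : Fin r → Y) f => ∀ i, f (x i) = g i) F m}

/-- `StdForce V m`: in the standard model (the true value of the target at the queried input
is revealed after each guess), the adversary can force `m` mistakes against every learner,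
staying consistent with the version space `V`. Here `yc g` is the value revealed when the
learner guesses `g` (a mistake iff `yc g ≠ g`, recorded by `c g`). -/
inductive StdForce {X Y : Type*} : Set (X → Y) → ℕ → Prop where
  | zero (V : Set (X → Y)) : V.Nonempty → StdForce V 0
  | step (V : Set (X → Y)) (m : ℕ) (x : X) (yc : Y → Y) (c : Y → Bool)
      (hmistake : ∀ g : Y, c g = true → yc g ≠ g)
      (hcorrect : ∀ g : Y, c g = false → yc g = g)
      (hne : ∀ g : Y, {f ∈ V | f x = yc g}.Nonempty)
      (h : ∀ g : Y, StdForce {f ∈ V | f x = yc g} (if c g then m else m + 1)) :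
      StdForce V (m + 1)

/-- `opt_std(F)`: the optimal worst-case number of mistakes in the standard model. -/
noncomputable def optStd {X Y : Type*} (F : Set (X → Y)) : ℕ :=
  sSup {m | StdForce F m}

universe u v


section Aux
variable {X : Type u} {Y : Type v}

theorem stdForce_mono {V : Set (X → Y)} {m : ℕ} (h : StdForce V m) :
    ∀ W, V ⊆ W → StdForce W m := by
  induction h with
  | zero V hV => exact fun W hVW => .zero W (hV.mono hVW)
  | step V m x yc c hm hc hne hbr ih =>
    intro W hVW
    exact .step W m x yc c hm hc (fun g => ((hne g).mono (fun f hf => ⟨hVW hf.1, hf.2⟩)))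
      (fun g => ih g _ (fun f hf => ⟨hVW hf.1, hf.2⟩))

theorem stdForce_le [Nonempty Y] {V : Set (X → Y)} {m : ℕ} (h : StdForce V m) :
    ∀ n, n ≤ m → StdForce V n := by
  induction h with
  | zero V hV =>
    intro n hn
    exact Nat.le_zero.mp hn ▸ .zero V hV
  | step V m x yc c hm hc hne hbr ih =>
    intro n hn
    match n with
    | 0 => exact .zero V ((hne (Classical.arbitrary Y)).mono (Set.sep_subset _ _))
    | n+1 =>
      refine .step V n x yc c hm hc hne (fun g => ?_)
      have ihg := ih g
      cases hcg : c g with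
      | true => simp only [hcg, if_true] at ihg ⊢; exact ihg n (by omega)
      | false => simp only [hcg, Bool.false_eq_true, if_false] at ihg ⊢; exact ihg (n+1) (by omega)

theorem stdForce_nonempty [Nonempty Y] {V : Set (X → Y)} {m : ℕ} (h : StdForce V m) :
    V.Nonempty := by
  cases h with
  | zero V hV => exact hV
  | step V m x yc c hm hc hne hbr =>
    exact (hne (Classical.arbitrary Y)).mono (Set.sep_subset _ _)

theorem stdForce_lt_ncard [Nonempty Y] {V : Set (X → Y)} {m : ℕ} (h : StdForce V m) :
    ∀ (_ : V.Finite), m < V.ncard := by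
  induction h with
  | zero V hV =>
    intro hfin
    exact (Set.ncard_pos hfin).mpr hV
  | step V m x yc c hm hc hne hbr ih =>
    intro hfin
    obtain ⟨f, hfV, _⟩ := hne (Classical.arbitrary Y)
    have hsub : {f' ∈ V | f' x = yc (f x)} ⊆ V := Set.sep_subset _ _
    cases hcg : c (f x) with
    | true =>
      have hlt := ih (f x)
      simp only [hcg, if_true] at hlt
      have h1 : m < ({f' ∈ V | f' x = yc (f x)}).ncard := hlt (hfin.subset hsub)
      have hnotin : f ∉ {f' ∈ V | f' x = yc (f x)} := by
        intro hfm
        exact hm (f x) hcg (hfm.2 ▸ rfl)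
      have h2 : ({f' ∈ V | f' x = yc (f x)}).ncard < V.ncard :=
        Set.ncard_lt_ncard ((Set.ssubset_iff_of_subset hsub).mpr ⟨f, hfV, hnotin⟩) hfin
      exact lt_of_le_of_lt h1 h2
    | false =>
      have hlt := ih (f x)
      simp only [hcg, Bool.false_eq_true, if_false] at hlt
      have h1 : m + 1 < ({f' ∈ V | f' x = yc (f x)}).ncard := hlt (hfin.subset hsub)
      have h2 := Set.ncard_le_ncard hsub hfin
      exact lt_of_lt_of_le h1 h2

theorem stdForce_bddAbove [Nonempty Y] {V : Set (X → Y)} (hfin : V.Finite) :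
    BddAbove {m | StdForce V m} :=
  ⟨V.ncard, fun m hm => (stdForce_lt_ncard hm hfin).le⟩

theorem le_optStd [Nonempty Y] {V : Set (X → Y)} (hfin : V.Finite) {m : ℕ}
    (h : StdForce V m) : m ≤ optStd V :=
  le_csSup (stdForce_bddAbove hfin) h

theorem stdForce_optStd [Nonempty Y] {V : Set (X → Y)} (hfin : V.Finite)
    (hV : V.Nonempty) : StdForce V (optStd V) :=
  Nat.sSup_mem ⟨0, .zero V hV⟩ (stdForce_bddAbove hfin)

theorem optStd_mono [Nonempty Y] {V W : Set (X → Y)} (hVW : V ⊆ W) (hfin : W.Finite) :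
    optStd V ≤ optStd W := by
  rcases Set.eq_empty_or_nonempty V with h | h
  · have : {m | StdForce V m} = ∅ := by
      ext m
      simp only [Set.mem_setOf_eq, Set.mem_empty_iff_false, iff_false]
      intro hm
      exact absurd (stdForce_nonempty hm) (by simp [h])
    simp [optStd, this]
  · exact le_optStd hfin (stdForce_mono (stdForce_optStd (hfin.subset hVW) h) W hVW)

end Aux

section Keeper
variable {X : Type u} {Y : Type v}

theorem twoVals [Nonempty Y] {V : Set (X → Y)} (hfin : V.Finite) (x : X) {v₁ v₂ : Y}
    (hv : v₁ ≠ v₂) (h₁ : {f ∈ V | f x = v₁}.Nonempty) (h₂ : {f ∈ V | f x = v₂}.Nonempty) :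
    min (optStd {f ∈ V | f x = v₁}) (optStd {f ∈ V | f x = v₂}) + 1 ≤ optStd V := by
  classical
  apply le_optStd hfin
  refine StdForce.step V _ x (fun g => if g = v₁ then v₂ else v₁) (fun _ => true)
    (fun g _ => ?_) (fun g hg => by simp at hg) (fun g => ?_) (fun g => ?_)
  · by_cases h : g = v₁
    · rw [if_pos h]; exact fun he => hv (h ▸ he.symm)
    · rw [if_neg h]; exact fun he => h he.symm
  · by_cases h : g = v₁
    · rw [if_pos h]; exact h₂
    · rw [if_neg h]; exact h₁
  · rw [if_pos rfl]
    by_cases h : g = v₁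
    · rw [if_pos h]
      exact stdForce_le (stdForce_optStd (hfin.subset (Set.sep_subset _ _)) h₂) _
        (min_le_right _ _)
    · rw [if_neg h]
      exact stdForce_le (stdForce_optStd (hfin.subset (Set.sep_subset _ _)) h₁) _
        (min_le_left _ _)

/-- The class of functions in `V` that agree with guess `u` on the query tuple `q`. -/
def clsr {r : ℕ} (V : Set (X → Y)) (q : Fin r → X) (u : Fin r → Y) : Set (X → Y) :=
  {f ∈ V | ∀ i, f (q i) = u i}

theorem clsr_subset {r : ℕ} (V : Set (X → Y)) (q : Fin r → X) (u : Fin r → Y) :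
    clsr V q u ⊆ V := Set.sep_subset _ _

theorem keeper_spec [Nonempty Y] {r : ℕ} (V : Set (X → Y)) (q : Fin r → X) :
    ∃ g : Fin r → Y, ∀ u, u ≠ g → V.Finite → (clsr V q u).Nonempty →
      optStd (clsr V q u) < optStd V := by
  by_cases hex : ∃ u, (clsr V q u).Nonempty ∧ V.Finite ∧ optStd (clsr V q u) = optStd V
  · obtain ⟨u₀, hne₀, hfin, heq₀⟩ := hex
    refine ⟨u₀, fun u hu hfin' hneu => ?_⟩
    rcases lt_or_eq_of_le (optStd_mono (clsr_subset V q u) hfin') with h | h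
    · exact h
    exfalso
    obtain ⟨i, hi⟩ := Function.ne_iff.mp hu
    have hA : clsr V q u ⊆ {f ∈ V | f (q i) = u i} := fun f hf => ⟨hf.1, hf.2 i⟩
    have hB : clsr V q u₀ ⊆ {f ∈ V | f (q i) = u₀ i} := fun f hf => ⟨hf.1, hf.2 i⟩
    have h1 : optStd {f ∈ V | f (q i) = u i} = optStd V :=
      le_antisymm (optStd_mono (Set.sep_subset _ _) hfin')
        (h ▸ optStd_mono hA (hfin'.subset (Set.sep_subset _ _)))
    have h2 : optStd {f ∈ V | f (q i) = u₀ i} = optStd V :=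
      le_antisymm (optStd_mono (Set.sep_subset _ _) hfin')
        (heq₀ ▸ optStd_mono hB (hfin'.subset (Set.sep_subset _ _)))
    have := twoVals hfin' (q i) hi (hneu.mono hA) (hne₀.mono hB)
    rw [h1, h2, min_self] at this
    exact Nat.not_succ_le_self _ this
  · push_neg at hex
    exact ⟨Classical.arbitrary _, fun u _ hfin hne =>
      lt_of_le_of_ne (optStd_mono (clsr_subset V q u) hfin) (hex u hne hfin)⟩

/-- The learner's prediction on query tuple `q` given version space `V`:
a tuple such that every other consistent class has strictly smaller `optStd`. -/
noncomputable def predt [Nonempty Y] {r : ℕ} (V : Set (X → Y)) (q : Fin r → X) :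
    Fin r → Y :=
  Classical.choose (keeper_spec V q)

theorem predt_spec [Nonempty Y] {r : ℕ} (V : Set (X → Y)) (q : Fin r → X) :
    ∀ u, u ≠ predt V q → V.Finite → (clsr V q u).Nonempty →
      optStd (clsr V q u) < optStd V :=
  Classical.choose_spec (keeper_spec V q)

end Keeper

section Lists

theorem list_sum_flatMap {α β : Type*} (w : β → ℝ) (l : List α) (ch : α → List β) :
    ((l.flatMap ch).map w).sum = (l.map (fun a => ((ch a).map w).sum)).sum := by
  induction l with
  | nil => simp
  | cons a t ih => simp [List.flatMap_cons, ih]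

theorem list_sum_map_add {α : Type*} (f g : α → ℝ) (l : List α) :
    (l.map (fun a => f a + g a)).sum = (l.map f).sum + (l.map g).sum := by
  induction l with
  | nil => simp
  | cons a t ih => simp [ih]; ring

theorem list_sum_map_sub {α : Type*} (f g : α → ℝ) (l : List α) :
    (l.map (fun a => f a - g a)).sum = (l.map f).sum - (l.map g).sum := by
  induction l with
  | nil => simp
  | cons a t ih => simp [ih]; ring

theorem list_sum_map_mul_left {α : Type*} (C : ℝ) (f : α → ℝ) (l : List α) :
    (l.map (fun a => C * f a)).sum = C * (l.map f).sum := by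
  induction l with
  | nil => simp
  | cons a t ih => simp [ih]; ring

end Lists

section Main

attribute [local instance] Classical.propDecidable

variable {X : Type u} {Y : Type v} [Fintype Y] [Nonempty Y] {r : ℕ}

/-- The weight of a list of "experts". -/
noncomputable def psi (cc : ℝ) (E : List (Set (X → Y) × ℕ)) : ℝ :=
  (E.map (fun p => cc ^ p.2)).sum

theorem psi_nonneg {cc : ℝ} (hcc : 0 ≤ cc) (E : List (Set (X → Y) × ℕ)) :
    0 ≤ psi cc E :=
  List.sum_nonneg (by
    intro x hx
    obtain ⟨p, _, rfl⟩ := List.mem_map.mp hx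
    exact pow_nonneg hcc _)

theorem list_sum_partition (κ : (Set (X → Y) × ℕ) → (Fin r → Y)) (w : (Set (X → Y) × ℕ) → ℝ)
    (l : List (Set (X → Y) × ℕ)) :
    ∑ u ∈ Finset.univ, (l.map (fun p => if κ p = u then w p else 0)).sum
      = (l.map w).sum := by
  induction l with
  | nil => simp
  | cons a t ih =>
    simp only [List.map_cons, List.sum_cons, Finset.sum_add_distrib, ih]
    congr 1
    rw [Finset.sum_ite_eq Finset.univ (κ a) (fun _ => w a)]
    simp

/-- Invariant: every expert is a nonempty subclass of `F` whose paid splits plus remaining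
standard optimum is at most the standard optimum of `F`. -/
def ExpOK (F : Set (X → Y)) (E : List (Set (X → Y) × ℕ)) : Prop :=
  ∀ p ∈ E, p.1.Nonempty ∧ p.1 ⊆ F ∧ p.2 + optStd p.1 ≤ optStd F

/-- Invariant: the current (weak-model) version space is covered by the experts. -/
def Covers (E : List (Set (X → Y) × ℕ)) (V : Set (X → Y)) : Prop :=
  ∀ f ∈ V, ∃ p ∈ E, f ∈ p.1

theorem main_induction (F : Set (X → Y)) (cc lam : ℝ) (hF : F.Finite)
    (hcc0 : 0 < cc) (hcc1 : cc ≤ 1)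
    (ht : 0 < 1 - ((Fintype.card (Fin r → Y) : ℝ) - 1) * cc)
    (hlam : lam = 1 - (1 - ((Fintype.card (Fin r → Y) : ℝ) - 1) * cc) /
      (Fintype.card (Fin r → Y) : ℝ))
    {V : Set (X → Y)} {m : ℕ}
    (hG : GuessForce (fun (x : Fin r → X) (g : Fin r → Y) f => ∀ i, f (x i) = g i) V m) :
    ∀ E, ExpOK F E → Covers E V → cc ^ (optStd F) ≤ lam ^ m * psi cc E := by
  have hKpos : (0 : ℝ) < (Fintype.card (Fin r → Y) : ℝ) := by
    exact_mod_cast Fintype.card_pos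
  set Kc : ℝ := (Fintype.card (Fin r → Y) : ℝ) with hKc
  have hlam0 : 0 ≤ lam := by
    rw [hlam]
    have hK1 : (1:ℝ) ≤ Kc := by rw [hKc]; exact_mod_cast Fintype.card_pos
    have h1 : (1 - (Kc - 1) * cc) / Kc ≤ 1 := by
      rw [div_le_one hKpos]
      nlinarith [mul_nonneg (sub_nonneg.mpr hK1) hcc0.le]
    linarith
  induction hG with
  | zero V hV =>
    intro E hOK hCov
    obtain ⟨f, hf⟩ := hV
    obtain ⟨p, hpE, hfp⟩ := hCov f hf
    have h1 : cc ^ optStd F ≤ cc ^ p.2 :=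
      pow_le_pow_of_le_one hcc0.le hcc1 (by have := (hOK p hpE).2.2; omega)
    have h2 : cc ^ p.2 ≤ psi cc E :=
      List.single_le_sum (by
        intro x hx
        obtain ⟨p', _, rfl⟩ := List.mem_map.mp hx
        exact pow_nonneg hcc0.le _) _ (List.mem_map_of_mem hpE)
    rw [pow_zero, one_mul]
    linarith
  | step V m q c hne hbr ih =>
    intro E hOK hCov
    -- the learner's guess: the weighted-plurality prediction among experts
    set κ : (Set (X → Y) × ℕ) → (Fin r → Y) := fun p => predt p.1 q with hκ
    set S : (Fin r → Y) → ℝ :=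
      fun u => (E.map (fun p => if κ p = u then cc ^ p.2 else 0)).sum with hS
    have hpart : ∑ u ∈ Finset.univ, S u = psi cc E := list_sum_partition κ _ E
    have hpigeon : ∃ u₀, psi cc E ≤ Kc * S u₀ := by
      by_contra hno
      push_neg at hno
      have hlt : ∀ u, S u < psi cc E / Kc := by
        intro u
        rw [lt_div_iff₀ hKpos]
        have := hno u
        linarith [hno u]
      have hsum := Finset.sum_lt_sum_of_nonempty (Finset.univ_nonempty
        (α := Fin r → Y)) (fun u _ => hlt u)
      rw [hpart] at hsum
      rw [Finset.sum_const, Finset.card_univ, nsmul_eq_mul, ← hKc,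
        mul_div_cancel₀ _ (ne_of_gt hKpos)] at hsum
      exact lt_irrefl _ hsum
    obtain ⟨g, hg⟩ := hpigeon
    have ihg := ih g
    have hneg := hne g
    cases hcg : c g with
    | false =>
      rw [hcg] at ihg
      simp only [Bool.false_eq_true, if_false] at ihg
      set E' := E.flatMap (fun p =>
        if (clsr p.1 q g).Nonempty then [(clsr p.1 q g, p.2)] else []) with hE'
      have hOK' : ExpOK F E' := by
        intro p' hp'
        obtain ⟨p, hpE, hp'mem⟩ := List.mem_flatMap.mp hp'
        by_cases hcl : (clsr p.1 q g).Nonempty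
        · rw [if_pos hcl, List.mem_singleton] at hp'mem
          subst hp'mem
          obtain ⟨hpne, hpF, hpb⟩ := hOK p hpE
          refine ⟨hcl, (clsr_subset _ _ _).trans hpF, ?_⟩
          exact le_trans (Nat.add_le_add_left
            (optStd_mono (clsr_subset p.1 q g) (hF.subset hpF)) p.2) hpb
        · rw [if_neg hcl] at hp'mem
          exact absurd hp'mem List.not_mem_nil
      have hCov' : Covers E' {f ∈ V | (fun (x : Fin r → X) (g : Fin r → Y) f =>
          ∀ i, f (x i) = g i) q g f} := by
        rintro f ⟨hfV, hfok⟩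
        obtain ⟨p, hpE, hfp⟩ := hCov f hfV
        have hfcl : f ∈ clsr p.1 q g := ⟨hfp, hfok⟩
        refine ⟨(clsr p.1 q g, p.2), List.mem_flatMap.mpr ⟨p, hpE, ?_⟩, hfcl⟩
        rw [if_pos ⟨f, hfcl⟩]
        exact List.mem_singleton.mpr rfl
      have hψ : psi cc E' ≤ psi cc E := by
        rw [hE', psi, list_sum_flatMap]
        refine List.sum_le_sum ?_
        intro p _
        by_cases hcl : (clsr p.1 q g).Nonempty
        · rw [if_pos hcl]; simp
        · rw [if_neg hcl]; simp [pow_nonneg hcc0.le]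
      calc cc ^ optStd F ≤ lam ^ (m + 1) * psi cc E' := ihg E' hOK' hCov'
        _ ≤ lam ^ (m + 1) * psi cc E :=
          mul_le_mul_of_nonneg_left hψ (pow_nonneg hlam0 _)
    | true =>
      rw [hcg] at ihg
      simp only [if_true] at ihg
      set chil : (Set (X → Y) × ℕ) → List (Set (X → Y) × ℕ) := fun p =>
        if κ p = g then
          ((Finset.univ.filter (fun u => u ≠ g ∧ (clsr p.1 q u).Nonempty)).toList.map
            (fun u => (clsr p.1 q u, p.2 + 1)))
        else
          (if {f ∈ p.1 | ¬ ∀ i, f (q i) = g i}.Nonempty then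
            [({f ∈ p.1 | ¬ ∀ i, f (q i) = g i}, p.2)] else []) with hchil
      set E' := E.flatMap chil with hE'
      have hOK' : ExpOK F E' := by
        intro p' hp'
        obtain ⟨p, hpE, hp'mem⟩ := List.mem_flatMap.mp hp'
        obtain ⟨hpne, hpF, hpb⟩ := hOK p hpE
        rw [hchil] at hp'mem
        dsimp only at hp'mem
        by_cases hpg : κ p = g
        · rw [if_pos hpg] at hp'mem
          obtain ⟨u, humem, rfl⟩ := List.mem_map.mp hp'mem
          rw [Finset.mem_toList, Finset.mem_filter] at humem
          obtain ⟨-, hune, hucl⟩ := humem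
          have hdrop : optStd (clsr p.1 q u) < optStd p.1 :=
            predt_spec p.1 q u (fun he => hune (he.trans hpg)) (hF.subset hpF) hucl
          refine ⟨hucl, (clsr_subset _ _ _).trans hpF, ?_⟩
          have h5 : p.2 + 1 + optStd (clsr p.1 q u) ≤ p.2 + optStd p.1 := by omega
          exact le_trans h5 hpb
        · rw [if_neg hpg] at hp'mem
          by_cases hsep : ({f ∈ p.1 | ¬ ∀ i, f (q i) = g i}).Nonempty
          · rw [if_pos hsep, List.mem_singleton] at hp'mem
            subst hp'mem
            refine ⟨hsep, (Set.sep_subset _ _).trans hpF, ?_⟩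
            exact le_trans (Nat.add_le_add_left
              (optStd_mono (Set.sep_subset p.1 _) (hF.subset hpF)) p.2) hpb
          · rw [if_neg hsep] at hp'mem
            exact absurd hp'mem List.not_mem_nil
      have hCov' : Covers E' {f ∈ V | ¬ (fun (x : Fin r → X) (g : Fin r → Y) f =>
          ∀ i, f (x i) = g i) q g f} := by
        rintro f ⟨hfV, hfok⟩
        obtain ⟨p, hpE, hfp⟩ := hCov f hfV
        by_cases hpg : κ p = g
        · set u : Fin r → Y := fun i => f (q i) with hu
          have hune : u ≠ g := by
            intro he
            exact hfok (fun i => congrFun he i)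
          have hfcl : f ∈ clsr p.1 q u := ⟨hfp, fun i => rfl⟩
          refine ⟨(clsr p.1 q u, p.2 + 1), List.mem_flatMap.mpr ⟨p, hpE, ?_⟩, hfcl⟩
          rw [hchil]
          dsimp only
          rw [if_pos hpg]
          exact List.mem_map.mpr ⟨u, Finset.mem_toList.mpr (Finset.mem_filter.mpr
            ⟨Finset.mem_univ u, hune, ⟨f, hfcl⟩⟩), rfl⟩
        · have hfcl : f ∈ {f' ∈ p.1 | ¬ ∀ i, f' (q i) = g i} := ⟨hfp, hfok⟩
          refine ⟨({f' ∈ p.1 | ¬ ∀ i, f' (q i) = g i}, p.2),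
            List.mem_flatMap.mpr ⟨p, hpE, ?_⟩, hfcl⟩
          rw [hchil]
          dsimp only
          rw [if_neg hpg, if_pos ⟨f, hfcl⟩]
          exact List.mem_singleton.mpr rfl
      have hψ' : psi cc E' ≤ (Kc - 1) * cc * S g + (psi cc E - S g) := by
        have hstep1 : psi cc E' ≤ (E.map (fun p =>
            if κ p = g then (Kc - 1) * cc * cc ^ p.2 else cc ^ p.2)).sum := by
          rw [hE', psi, list_sum_flatMap]
          refine List.sum_le_sum ?_
          intro p _
          rw [hchil]
          dsimp only
          by_cases hpg : κ p = g
          · rw [if_pos hpg, if_pos hpg]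
            rw [List.map_map]
            have hconst : ∀ x ∈ ((Finset.univ.filter
                (fun u => u ≠ g ∧ (clsr p.1 q u).Nonempty)).toList.map
                ((fun p => cc ^ p.2) ∘ (fun u => (clsr p.1 q u, p.2 + 1)))),
                x = cc ^ (p.2 + 1) := by
              intro x hx
              obtain ⟨u, _, rfl⟩ := List.mem_map.mp hx
              rfl
            rw [List.sum_eq_card_nsmul _ _ hconst]
            rw [List.length_map, Finset.length_toList, nsmul_eq_mul]
            have hcard : ((Finset.univ.filter
                (fun u => u ≠ g ∧ (clsr p.1 q u).Nonempty)).card : ℝ) ≤ Kc - 1 := by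
              have hsub : (Finset.univ.filter
                  (fun u => u ≠ g ∧ (clsr p.1 q u).Nonempty)) ⊆ Finset.univ.erase g := by
                intro u hu
                rw [Finset.mem_filter] at hu
                exact Finset.mem_erase.mpr ⟨hu.2.1, Finset.mem_univ u⟩
              have h1 := Finset.card_le_card hsub
              have h2 : (Finset.univ.erase g).card = Fintype.card (Fin r → Y) - 1 := by
                rw [Finset.card_erase_of_mem (Finset.mem_univ g), Finset.card_univ]
              have h3 : 1 ≤ Fintype.card (Fin r → Y) := Fintype.card_pos
              have h4 : (Finset.univ.filter
                  (fun u => u ≠ g ∧ (clsr p.1 q u).Nonempty)).card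
                  ≤ Fintype.card (Fin r → Y) - 1 := h2 ▸ h1
              rw [hKc, ← Nat.cast_one, ← Nat.cast_sub h3]
              exact_mod_cast h4
            calc ((Finset.univ.filter (fun u => u ≠ g ∧ (clsr p.1 q u).Nonempty)).card : ℝ)
                  * cc ^ (p.2 + 1)
                ≤ (Kc - 1) * cc ^ (p.2 + 1) :=
                  mul_le_mul_of_nonneg_right hcard (pow_nonneg hcc0.le _)
              _ = (Kc - 1) * cc * cc ^ p.2 := by ring
          · rw [if_neg hpg, if_neg hpg]
            by_cases hsep : ({f ∈ p.1 | ¬ ∀ i, f (q i) = g i}).Nonempty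
            · rw [if_pos hsep]; simp
            · rw [if_neg hsep]; simp [pow_nonneg hcc0.le]
        have hstep2 : (E.map (fun p =>
            if κ p = g then (Kc - 1) * cc * cc ^ p.2 else cc ^ p.2)).sum
            = (Kc - 1) * cc * S g + (psi cc E - S g) := by
          have hpoint : ∀ p : Set (X → Y) × ℕ,
              (if κ p = g then (Kc - 1) * cc * cc ^ p.2 else cc ^ p.2)
              = (Kc - 1) * cc * (if κ p = g then cc ^ p.2 else 0)
                + (if κ p = g then 0 else cc ^ p.2) := by
            intro p
            by_cases hpg : κ p = g <;> simp [hpg]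
          rw [List.map_congr_left (fun p _ => hpoint p), list_sum_map_add,
            list_sum_map_mul_left]
          have hT : (E.map (fun p => if κ p = g then 0 else cc ^ p.2)).sum
              = psi cc E - S g := by
            have : ∀ p : Set (X → Y) × ℕ,
                (if κ p = g then (0:ℝ) else cc ^ p.2)
                = cc ^ p.2 - (if κ p = g then cc ^ p.2 else 0) := by
              intro p
              by_cases hpg : κ p = g <;> simp [hpg]
            rw [List.map_congr_left (fun p _ => this p)]
            rw [list_sum_map_sub (fun p => cc ^ p.2)
              (fun p => if κ p = g then cc ^ p.2 else 0) E]
            rfl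
          rw [hT, hS]
        exact le_trans hstep1 (le_of_eq hstep2)
      have hlamψ : (Kc - 1) * cc * S g + (psi cc E - S g) ≤ lam * psi cc E := by
        have hSg : psi cc E / Kc ≤ S g := by
          rw [div_le_iff₀ hKpos]
          linarith [hg]
        rw [hlam]
        have expand : (1 - (1 - (Kc - 1) * cc) / Kc) * psi cc E
            = psi cc E - (1 - (Kc - 1) * cc) * (psi cc E / Kc) := by
          field_simp
        rw [expand]
        nlinarith [mul_le_mul_of_nonneg_left hSg ht.le]
      calc cc ^ optStd F ≤ lam ^ m * psi cc E' := ihg E' hOK' hCov'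
        _ ≤ lam ^ m * ((Kc - 1) * cc * S g + (psi cc E - S g)) :=
          mul_le_mul_of_nonneg_left (le_trans hψ' (le_refl _)) (pow_nonneg hlam0 _)
        _ ≤ lam ^ m * (lam * psi cc E) :=
          mul_le_mul_of_nonneg_left hlamψ (pow_nonneg hlam0 _)
        _ = lam ^ (m + 1) * psi cc E := by ring

end Main

section Wrap

theorem guessForce_nonempty {α Q A : Type*} {ok : Q → A → α → Prop} [Nonempty A]
    {V : Set α} {m : ℕ} (h : GuessForce ok V m) : V.Nonempty := by
  cases h with
  | zero V hV => exact hV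
  | step V m q c hne h =>
    have hg := hne (Classical.arbitrary A)
    cases hcg : c (Classical.arbitrary A) with
    | true => rw [hcg] at hg; simp only [if_true] at hg; exact hg.mono (Set.sep_subset _ _)
    | false =>
      rw [hcg] at hg; simp only [Bool.false_eq_true, if_false] at hg
      exact hg.mono (Set.sep_subset _ _)

variable {X : Type u} {Y : Type v} [Fintype Y] [Nonempty Y] {r : ℕ}

theorem weak_mistake_bound (F : Set (X → Y)) (cc lam : ℝ) (hF : F.Finite)
    (hcc0 : 0 < cc) (hcc1 : cc ≤ 1)
    (ht : 0 < 1 - ((Fintype.card (Fin r → Y) : ℝ) - 1) * cc)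
    (hlam : lam = 1 - (1 - ((Fintype.card (Fin r → Y) : ℝ) - 1) * cc) /
      (Fintype.card (Fin r → Y) : ℝ))
    {m : ℕ}
    (hG : GuessForce (fun (x : Fin r → X) (g : Fin r → Y) f => ∀ i, f (x i) = g i) F m) :
    cc ^ (optStd F) ≤ lam ^ m := by
  have hFne : F.Nonempty := guessForce_nonempty hG
  have h := main_induction F cc lam hF hcc0 hcc1 ht hlam hG [(F, 0)]
    (by
      intro p hp
      rw [List.mem_singleton] at hp
      subst hp
      exact ⟨hFne, subset_rfl, by simp⟩)
    (fun f hf => ⟨(F, 0), List.mem_singleton.mpr rfl, hf⟩)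
  simpa [psi] using h

end Wrap


section Arith

theorem arith_bound (ε K cc lam : ℝ) (s m : ℕ) (hε : 0 < ε) (hε1 : ε ≤ 1) (hK : 2 ≤ K)
    (hcc : cc = (ε / 4) / K) (hlam : lam = 1 - (1 - (K - 1) * cc) / K)
    (hlog : (2 / ε) * Real.log (4 / ε) ≤ Real.log K)
    (hle : cc ^ s ≤ lam ^ m) : (m : ℝ) ≤ (1 + ε) * (K * Real.log K) * s := by
  have hK0 : (0:ℝ) < K := by linarith
  have hδ0 : (0:ℝ) < ε / 4 := by linarith
  have hcc0 : 0 < cc := hcc ▸ div_pos hδ0 hK0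
  have hKcc : (K - 1) * cc ≤ ε / 4 := by
    rw [hcc]
    calc (K - 1) * (ε / 4 / K) = (ε / 4) * ((K - 1) / K) := by ring
      _ ≤ (ε / 4) * 1 := by
        refine mul_le_mul_of_nonneg_left ?_ hδ0.le
        rw [div_le_one hK0]; linarith
      _ = ε / 4 := by ring
  have ht : 0 < 1 - (K - 1) * cc := by linarith
  have haK : (1 - (K - 1) * cc) / K ≤ 1 / 2 := by
    rw [div_le_div_iff₀ hK0 (by norm_num : (0:ℝ) < 2)]
    nlinarith [mul_nonneg (by linarith : (0:ℝ) ≤ K - 1) hcc0.le]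
  have hlam0 : 0 < lam := by rw [hlam]; linarith
  have hlogle : (s:ℝ) * Real.log cc ≤ (m:ℝ) * Real.log lam := by
    have h := Real.log_le_log (pow_pos hcc0 s) hle
    rwa [Real.log_pow, Real.log_pow] at h
  have hloglam : Real.log lam ≤ -((1 - (K - 1) * cc) / K) := by
    have h1 : lam ≤ Real.exp (-((1 - (K - 1) * cc) / K)) := by
      have h2 := Real.add_one_le_exp (-((1 - (K - 1) * cc) / K))
      rw [hlam]; linarith
    calc Real.log lam ≤ Real.log (Real.exp (-((1 - (K - 1) * cc) / K))) :=
          Real.log_le_log hlam0 h1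
      _ = -((1 - (K - 1) * cc) / K) := Real.log_exp _
  have hmava : (m:ℝ) * ((1 - (K - 1) * cc) / K) ≤ (s:ℝ) * (-Real.log cc) := by
    have hm0 : (0:ℝ) ≤ m := Nat.cast_nonneg m
    have h3 := mul_le_mul_of_nonneg_left hloglam hm0
    nlinarith [h3, hlogle]
  have hlogcc : -Real.log cc = Real.log K + Real.log (4 / ε) := by
    rw [hcc, Real.log_div (ne_of_gt hδ0) (ne_of_gt hK0)]
    have h4 : Real.log (ε / 4) = -Real.log (4 / ε) := by
      rw [← Real.log_inv]
      congr 1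
      rw [inv_div]
    rw [h4]; ring
  have hL0 : 0 ≤ Real.log (4 / ε) := Real.log_nonneg (by rw [le_div_iff₀ hε]; linarith)
  have hlogK0 : 0 ≤ Real.log K := Real.log_nonneg (by linarith)
  have hL : Real.log (4 / ε) ≤ (ε / 2) * Real.log K := by
    have h5 := mul_le_mul_of_nonneg_left hlog (by linarith : (0:ℝ) ≤ ε / 2)
    have h6 : (ε / 2) * ((2 / ε) * Real.log (4 / ε)) = Real.log (4 / ε) := by
      field_simp
    linarith
  have hmain : (m:ℝ) * (1 - (K - 1) * cc) ≤ (s:ℝ) * (Real.log K + Real.log (4 / ε)) * K := by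
    calc (m:ℝ) * (1 - (K - 1) * cc) = ((m:ℝ) * ((1 - (K - 1) * cc) / K)) * K := by
          rw [mul_assoc, div_mul_cancel₀ _ (ne_of_gt hK0)]
      _ ≤ ((s:ℝ) * (-Real.log cc)) * K := mul_le_mul_of_nonneg_right hmava hK0.le
      _ = (s:ℝ) * (Real.log K + Real.log (4 / ε)) * K := by rw [hlogcc]
  have hm0 : (0:ℝ) ≤ m := Nat.cast_nonneg m
  have hs0 : (0:ℝ) ≤ s := Nat.cast_nonneg s
  have hm1 : (m:ℝ) * (1 - ε / 4) ≤ (s:ℝ) * (Real.log K + Real.log (4 / ε)) * K := by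
    have h7 : (m:ℝ) * (1 - ε / 4) ≤ (m:ℝ) * (1 - (K - 1) * cc) :=
      mul_le_mul_of_nonneg_left (by linarith) hm0
    linarith
  have hstep : (s:ℝ) * (Real.log K + Real.log (4 / ε)) * K
      ≤ (s:ℝ) * K * Real.log K * (1 + ε / 2) := by
    have h8 : (s:ℝ) * K * Real.log (4 / ε) ≤ (s:ℝ) * K * ((ε / 2) * Real.log K) :=
      mul_le_mul_of_nonneg_left hL (mul_nonneg hs0 hK0.le)
    nlinarith [h8]
  have hfinal : (s:ℝ) * K * Real.log K * (1 + ε / 2)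
      ≤ (1 - ε / 4) * ((1 + ε) * (K * Real.log K) * s) := by
    have hskl : 0 ≤ (s:ℝ) * K * Real.log K :=
      mul_nonneg (mul_nonneg hs0 hK0.le) hlogK0
    nlinarith [mul_nonneg hskl (mul_nonneg hε.le (by linarith : (0:ℝ) ≤ 1 - ε))]
  have h14 : (0:ℝ) < 1 - ε / 4 := by linarith
  have hlast : (m:ℝ) * (1 - ε / 4) ≤ ((1 + ε) * (K * Real.log K) * s) * (1 - ε / 4) := by
    calc (m:ℝ) * (1 - ε / 4) ≤ (s:ℝ) * K * Real.log K * (1 + ε / 2) := by linarith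
      _ ≤ (1 - ε / 4) * ((1 + ε) * (K * Real.log K) * s) := hfinal
      _ = ((1 + ε) * (K * Real.log K) * s) * (1 - ε / 4) := by ring
  exact le_of_mul_le_mul_right hlast h14

end Arith


section Final

theorem stmt9_aux (r : ℕ) (hr : 1 ≤ r) (ε : ℝ) (hε : 0 < ε) (hε1 : ε ≤ 1) :
    ∃ k₀ : ℕ, ∀ (X : Type u) (Y : Type v) [Fintype Y], k₀ ≤ Fintype.card Y →
      ∀ F : Set (X → Y), F.Finite →
      (optWeakCart r F : ℝ) ≤
        (1 + ε) * ((Fintype.card Y : ℝ) ^ r * r * Real.log (Fintype.card Y))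
          * (optStd F : ℝ) := by
  refine ⟨max 2 (⌈Real.exp ((2 / ε) * Real.log (4 / ε))⌉₊ + 1), ?_⟩
  intro X Y _ hk F hF
  set k := Fintype.card Y with hkdef
  have hk2 : 2 ≤ k := le_trans (le_max_left _ _) hk
  haveI hYne : Nonempty Y := Fintype.card_pos_iff.mp (by omega)
  have hkexp : Real.exp ((2 / ε) * Real.log (4 / ε)) ≤ (k : ℝ) := by
    have h1 : ⌈Real.exp ((2 / ε) * Real.log (4 / ε))⌉₊ + 1 ≤ k :=
      le_trans (le_max_right _ _) hk
    calc Real.exp ((2 / ε) * Real.log (4 / ε))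
        ≤ (⌈Real.exp ((2 / ε) * Real.log (4 / ε))⌉₊ : ℝ) := Nat.le_ceil _
      _ ≤ (k : ℝ) := by exact_mod_cast (by omega : ⌈Real.exp ((2/ε) * Real.log (4/ε))⌉₊ ≤ k)
  have hk0 : (0:ℝ) < (k:ℝ) := by exact_mod_cast (by omega : 0 < k)
  have hlogk : (2 / ε) * Real.log (4 / ε) ≤ Real.log k :=
    (Real.le_log_iff_exp_le hk0).mpr hkexp
  have hKcard : (Fintype.card (Fin r → Y) : ℝ) = (k : ℝ) ^ r := by
    rw [Fintype.card_fun, Fintype.card_fin]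
    push_cast
    rfl
  set K : ℝ := (k : ℝ) ^ r with hKdef
  have hkre : (2:ℝ) ≤ (k:ℝ) := by exact_mod_cast hk2
  have hK2 : 2 ≤ K := by
    calc (2:ℝ) ≤ (k:ℝ) := hkre
      _ ≤ (k:ℝ) ^ r := le_self_pow₀ (by linarith) (by omega)
  have hlogK : Real.log K = r * Real.log k := by rw [hKdef, Real.log_pow]
  have hlogknn : 0 ≤ Real.log k := Real.log_nonneg (by linarith)
  have hlogle : (2 / ε) * Real.log (4 / ε) ≤ Real.log K := by
    rw [hlogK]
    have h2 : (1:ℝ) * Real.log k ≤ (r:ℝ) * Real.log k :=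
      mul_le_mul_of_nonneg_right (by exact_mod_cast hr) hlogknn
    linarith
  set cc : ℝ := (ε / 4) / K with hccdef
  set lam : ℝ := 1 - (1 - (K - 1) * cc) / K with hlamdef
  have hK0 : (0:ℝ) < K := by linarith
  have hcc0 : 0 < cc := div_pos (by linarith) hK0
  have hcc1 : cc ≤ 1 := by
    rw [hccdef, div_le_one hK0]; linarith
  have hKcc : (K - 1) * cc ≤ ε / 4 := by
    rw [hccdef]
    calc (K - 1) * (ε / 4 / K) = (ε / 4) * ((K - 1) / K) := by ring
      _ ≤ (ε / 4) * 1 :=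
        mul_le_mul_of_nonneg_left (by rw [div_le_one hK0]; linarith) (by linarith)
      _ = ε / 4 := mul_one _
  have ht : 0 < 1 - (K - 1) * cc := by linarith
  have claim : ∀ m : ℕ,
      GuessForce (fun (x : Fin r → X) (g : Fin r → Y) f => ∀ i, f (x i) = g i) F m →
      (m : ℝ) ≤ (1 + ε) * (K * Real.log K) * (optStd F : ℝ) := by
    intro m hG
    have hwb := weak_mistake_bound F cc lam hF hcc0 hcc1
      (by rw [hKcard]; exact ht) (by rw [hKcard]) hG
    exact arith_bound ε K cc lam (optStd F) m hε hε1 hK2 hccdef hlamdef hlogle hwb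
  have hB0 : 0 ≤ (1 + ε) * (K * Real.log K) * (optStd F : ℝ) := by
    have : 0 ≤ Real.log K := Real.log_nonneg (by linarith)
    have h3 : 0 ≤ K * Real.log K := mul_nonneg hK0.le this
    have h4 : (0:ℝ) ≤ (optStd F : ℝ) := Nat.cast_nonneg _
    exact mul_nonneg (mul_nonneg (by linarith) h3) h4
  have hRHS : (1 + ε) * ((k : ℝ) ^ r * r * Real.log k) * (optStd F : ℝ)
      = (1 + ε) * (K * Real.log K) * (optStd F : ℝ) := by
    rw [hlogK, hKdef]; ring
  rw [hRHS]
  rcases Set.eq_empty_or_nonempty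
    {m | GuessForce (fun (x : Fin r → X) (g : Fin r → Y) f => ∀ i, f (x i) = g i) F m}
    with hS | hS
  · rw [optWeakCart, hS, csSup_empty]
    simpa using hB0
  · have hbdd : BddAbove
        {m | GuessForce (fun (x : Fin r → X) (g : Fin r → Y) f => ∀ i, f (x i) = g i) F m} :=
      ⟨⌊(1 + ε) * (K * Real.log K) * (optStd F : ℝ)⌋₊,
        fun m hm => Nat.le_floor (claim m hm)⟩
    exact claim _ (Nat.sSup_mem hS hbdd)

end Final


/-- Let `r ≥ 1`. For every `ε > 0` there exists `k₀` such that for every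
finite set `Y` with `|Y| = k ≥ k₀`, every set `X`, and every finite class `F` of functions
from `X` to `Y`, `opt_weak(CART_r(F)) ≤ (1+ε)·(k^r·r·ln k)·opt_std(F)`. -/
theorem stmt9 (r : ℕ) (hr : 1 ≤ r) (ε : ℝ) (hε : 0 < ε) :
    ∃ k₀ : ℕ, ∀ (X : Type u) (Y : Type v) [Fintype Y], k₀ ≤ Fintype.card Y →
      ∀ F : Set (X → Y), F.Finite →
      (optWeakCart r F : ℝ) ≤
        (1 + ε) * ((Fintype.card Y : ℝ) ^ r * r * Real.log (Fintype.card Y))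
          * (optStd F : ℝ) := by
  obtain ⟨k₀, h⟩ := stmt9_aux r hr (min ε 1) (lt_min hε one_pos) (min_le_right _ _)
  refine ⟨max k₀ 2, fun X Y _ hk F hF => le_trans (h X Y (le_trans (le_max_left _ _) hk) F hF) ?_⟩
  have hk2 : 2 ≤ Fintype.card Y := le_trans (le_max_right _ _) hk
  have hC0 : 0 ≤ (Fintype.card Y : ℝ) ^ r * r * Real.log (Fintype.card Y) := by
    have h1 : (0:ℝ) ≤ (Fintype.card Y : ℝ) ^ r := by positivity
    have h2 : 0 ≤ Real.log (Fintype.card Y) :=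
      Real.log_nonneg (by exact_mod_cast (by omega : 1 ≤ Fintype.card Y))
    have h3 : (0:ℝ) ≤ (r:ℝ) := Nat.cast_nonneg r
    positivity
  have hs0 : (0:ℝ) ≤ (optStd F : ℝ) := Nat.cast_nonneg _
  have h1ε : (1 + min ε 1) ≤ (1 + ε) := by
    have := min_le_left ε 1; linarith
  exact mul_le_mul_of_nonneg_right (mul_le_mul_of_nonneg_right h1ε hC0) hs0
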